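/- arXiv:1411.5900 — 3 statements merged into one kernel-verified Lean document; each statement's English description precedes it below -/
import Mathlib

section
/- Let (S, Ω, P) be a probability space and X_n : S → {0,1} a sequence of random variables with p_n := P(X_n = 1) and p_{i,j} := P(X_i X_j = 1). Suppose (1) ∑ p_n = ∞; (2) there is a function ψ : ℕ → ℝ such that for all m > 0, sup_n |p_{n,n+m} − p_n p_{n+m}| ≤ ψ(m); and (3) (∑_{m=1}^n ψ(m)(n−m)) / (∑_{i=1}^n p_i)² → 0 as n → ∞. Then P(∑_n X_n = ∞) = 1. -/
open MeasureTheory Filter Finset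
open Topology

lemma sum_shift_aux (ψ : ℕ → ℝ) (n : ℕ) :
    ∑ i ∈ Icc 1 n, ∑ j ∈ Icc 1 n, (if i < j then ψ (j - i) else 0)
      = ∑ m ∈ Icc 1 n, ψ m * ((n - m : ℕ) : ℝ) := by
  rw [← Finset.sum_product']
  rw [← Finset.sum_filter]
  have key : ∑ q ∈ (Icc 1 n ×ˢ Icc 1 n).filter (fun q => q.1 < q.2), ψ (q.2 - q.1)
      = ∑ q ∈ (Icc 1 n ×ˢ Icc 1 n).filter (fun q => q.2 + q.1 ≤ n), ψ q.1 := by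
    refine Finset.sum_nbij' (i := fun q => (q.2 - q.1, q.1)) (j := fun q => (q.2, q.2 + q.1))
      (hi := fun q hq => ?_) (hj := fun q hq => ?_) (left_neg := fun q hq => ?_)
      (right_neg := fun q hq => ?_) (h := fun q hq => rfl)
    · simp only [Finset.mem_filter, Finset.mem_product, Finset.mem_Icc] at hq ⊢
      omega
    · simp only [Finset.mem_filter, Finset.mem_product, Finset.mem_Icc] at hq ⊢
      omega
    · obtain ⟨x, y⟩ := q
      simp only [Finset.mem_filter, Finset.mem_product, Finset.mem_Icc] at hq
      simp only [Prod.mk.injEq]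
      exact ⟨trivial, by omega⟩
    · obtain ⟨x, y⟩ := q
      simp only [Finset.mem_filter, Finset.mem_product, Finset.mem_Icc] at hq
      simp only [Prod.mk.injEq]
      exact ⟨by omega, trivial⟩
  rw [key, Finset.sum_filter, Finset.sum_product]
  refine Finset.sum_congr rfl fun m hm => ?_
  simp only [Finset.mem_Icc] at hm
  calc ∑ i ∈ Icc 1 n, (if i + m ≤ n then ψ m else 0)
      = ∑ i ∈ (Icc 1 n).filter (fun i => i + m ≤ n), ψ m := by rw [Finset.sum_filter]
    _ = ((Icc 1 n).filter (fun i => i + m ≤ n)).card • ψ m := Finset.sum_const _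
    _ = ψ m * ((n - m : ℕ) : ℝ) := by
        have h2 : (Icc 1 n).filter (fun i => i + m ≤ n) = Icc 1 (n - m) := by
          ext i; simp only [Finset.mem_filter, Finset.mem_Icc]; omega
        rw [h2, Nat.card_Icc]
        simp [Nat.add_sub_cancel, nsmul_eq_mul, mul_comm]

lemma indicator_eq_of01 {S : Type*} {f : S → ℝ} (h : ∀ s, f s = 0 ∨ f s = 1) (s : S) :
    Set.indicator {s | f s = 1} (fun _ => (1 : ℝ)) s = f s := by
  rcases h s with h' | h'
  · rw [Set.indicator_of_notMem (by simp [Set.mem_setOf_eq, h']), h']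
  · rw [Set.indicator_of_mem (by exact h')]
    exact h'.symm

/-- Quasi-independent generalization of the second Borel–Cantelli lemma. -/
theorem generalized_borel_cantelli
    {S : Type*} [MeasurableSpace S] (P : Measure S) [IsProbabilityMeasure P]
    (X : ℕ → S → ℝ) (hmeas : ∀ n, Measurable (X n))
    (h01 : ∀ n s, X n s = 0 ∨ X n s = 1)
    (p : ℕ → ℝ) (hp : ∀ n, p n = (P {s | X n s = 1}).toReal)
    (p2 : ℕ → ℕ → ℝ) (hp2 : ∀ i j, p2 i j = (P {s | X i s * X j s = 1}).toReal)
    (hdiv : Tendsto (fun n => ∑ i ∈ Finset.Icc 1 n, p i) atTop atTop)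
    (ψ : ℕ → ℝ)
    (hψ : ∀ m > 0, ∀ n, |p2 n (n + m) - p n * p (n + m)| ≤ ψ m)
    (hlim : Tendsto
      (fun n => (∑ m ∈ Finset.Icc 1 n, ψ m * ((n : ℝ) - m)) /
        (∑ i ∈ Finset.Icc 1 n, p i) ^ 2) atTop (nhds 0)) :
    P {s | {n : ℕ | X n s = 1}.Infinite} = 1 := by
  classical
  -- measurability of basic sets
  have hms : ∀ n, MeasurableSet {s | X n s = 1} :=
    fun n => hmeas n (measurableSet_singleton 1)
  have hms2 : ∀ i j, MeasurableSet {s | X i s * X j s = 1} :=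
    fun i j => ((hmeas i).mul (hmeas j)) (measurableSet_singleton 1)
  have h01m : ∀ i j s, X i s * X j s = 0 ∨ X i s * X j s = 1 := by
    intro i j s
    rcases h01 i s with h | h <;> rcases h01 j s with h' | h' <;> simp [h, h']
  -- expectations
  have hInt : ∀ n, Integrable (X n) P := by
    intro n
    exact ((integrable_const (1 : ℝ)).indicator (hms n)).congr
      (Eventually.of_forall (indicator_eq_of01 (h01 n)))
  have hInt2 : ∀ i j, Integrable (fun s => X i s * X j s) P := by
    intro i j
    exact ((integrable_const (1 : ℝ)).indicator (hms2 i j)).congr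
      (Eventually.of_forall (indicator_eq_of01 (h01m i j)))
  have hEX : ∀ n, ∫ s, X n s ∂P = p n := by
    intro n
    rw [hp n]
    calc ∫ s, X n s ∂P
        = ∫ s, Set.indicator {s | X n s = 1} (fun _ => (1 : ℝ)) s ∂P :=
          integral_congr_ae (Eventually.of_forall fun s => (indicator_eq_of01 (h01 n) s).symm)
      _ = (P {s | X n s = 1}).toReal • (1 : ℝ) := integral_indicator_const _ (hms n)
      _ = (P {s | X n s = 1}).toReal := by simp
  have hEXX : ∀ i j, ∫ s, X i s * X j s ∂P = p2 i j := by
    intro i j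
    rw [hp2 i j]
    calc ∫ s, X i s * X j s ∂P
        = ∫ s, Set.indicator {s | X i s * X j s = 1} (fun _ => (1 : ℝ)) s ∂P :=
          integral_congr_ae (Eventually.of_forall fun s => (indicator_eq_of01 (h01m i j) s).symm)
      _ = (P {s | X i s * X j s = 1}).toReal • (1 : ℝ) := integral_indicator_const _ (hms2 i j)
      _ = (P {s | X i s * X j s = 1}).toReal := by simp
  -- partial sums
  set Sf : ℕ → S → ℝ := fun n s => ∑ i ∈ Icc 1 n, X i s with hSf
  set a : ℕ → ℝ := fun n => ∑ i ∈ Icc 1 n, p i with ha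
  set T : ℕ → ℝ := fun n => ∑ m ∈ Icc 1 n, ψ m * ((n : ℝ) - m) with hT
  have hX0le : ∀ i s, 0 ≤ X i s := by
    intro i s; rcases h01 i s with h | h <;> simp [h]
  have hXle1 : ∀ i s, X i s ≤ 1 := by
    intro i s; rcases h01 i s with h | h <;> simp [h]
  have hSmeas : ∀ n, Measurable (Sf n) :=
    fun n => Finset.measurable_sum _ (fun i _ => hmeas i)
  have hSL2 : ∀ n, MemLp (Sf n) 2 P := by
    intro n
    refine memLp_of_bounded (a := 0) (b := n) (ae_of_all _ fun s => ?_)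
      (hSmeas n).aestronglyMeasurable 2
    constructor
    · exact Finset.sum_nonneg fun i _ => hX0le i s
    · calc ∑ i ∈ Icc 1 n, X i s ≤ ∑ _i ∈ Icc 1 n, (1 : ℝ) :=
            Finset.sum_le_sum fun i _ => hXle1 i s
        _ = (n : ℝ) := by simp [Nat.card_Icc]
  have hES : ∀ n, ∫ s, Sf n s ∂P = a n := by
    intro n
    rw [hSf, ha]
    rw [integral_finset_sum _ (fun i _ => hInt i)]
    exact Finset.sum_congr rfl fun i _ => hEX i
  have hES2 : ∀ n, ∫ s, (Sf n s) ^ 2 ∂P = ∑ i ∈ Icc 1 n, ∑ j ∈ Icc 1 n, p2 i j := by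
    intro n
    have h1 : ∀ s, (Sf n s) ^ 2 = ∑ i ∈ Icc 1 n, ∑ j ∈ Icc 1 n, X i s * X j s := by
      intro s; rw [sq, hSf]; exact Finset.sum_mul_sum _ _ _ _
    simp only [h1]
    rw [integral_finset_sum _ (fun i _ => integrable_finset_sum _ (fun j _ => hInt2 i j))]
    refine Finset.sum_congr rfl fun i _ => ?_
    rw [integral_finset_sum _ (fun j _ => hInt2 i j)]
    exact Finset.sum_congr rfl fun j _ => hEXX i j
  -- variance identity
  have hvar : ∀ n, ProbabilityTheory.variance (Sf n) P
      = (∑ i ∈ Icc 1 n, ∑ j ∈ Icc 1 n, p2 i j) - (a n) ^ 2 := by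
    intro n
    rw [ProbabilityTheory.variance_eq_sub (hSL2 n), hES n]
    congr 1
    exact hES2 n
  -- auxiliary facts about p, p2, ψ
  have hdiag : ∀ i, p2 i i = p i := by
    intro i
    have hset : {s | X i s * X i s = 1} = {s | X i s = 1} := by
      ext s
      simp only [Set.mem_setOf_eq]
      rcases h01 i s with h | h <;> simp [h]
    rw [hp2, hp, hset]
  have hsymm : ∀ i j, p2 i j = p2 j i := by
    intro i j
    have hset : {s | X i s * X j s = 1} = {s | X j s * X i s = 1} := by
      ext s
      simp only [Set.mem_setOf_eq, mul_comm]
    rw [hp2, hp2, hset]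
  have hoff : ∀ i j, i < j → p2 i j - p i * p j ≤ ψ (j - i) := by
    intro i j hij
    have h := hψ (j - i) (by omega) i
    rw [Nat.add_sub_cancel' hij.le] at h
    exact le_trans (le_abs_self _) h
  -- variance bound
  have hvarle : ∀ n, ProbabilityTheory.variance (Sf n) P ≤ a n + 2 * T n := by
    intro n
    rw [hvar n]
    have hexp : (∑ i ∈ Icc 1 n, ∑ j ∈ Icc 1 n, p2 i j) - (a n) ^ 2
        = ∑ i ∈ Icc 1 n, ∑ j ∈ Icc 1 n, (p2 i j - p i * p j) := by
      rw [ha, sq, Finset.sum_mul_sum, ← Finset.sum_sub_distrib]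
      exact Finset.sum_congr rfl fun i _ => (Finset.sum_sub_distrib _ _).symm
    rw [hexp]
    have hq : ∀ i ∈ Icc 1 n, ∀ j ∈ Icc 1 n, p2 i j - p i * p j ≤
        (if i = j then p i else 0) + (if i < j then ψ (j - i) else 0)
          + (if j < i then ψ (i - j) else 0) := by
      intro i _ j _
      rcases lt_trichotomy i j with hij | hij | hij
      · have h := hoff i j hij
        simp only [if_pos hij, if_neg (Nat.ne_of_lt hij), if_neg (not_lt_of_gt hij)]
        linarith
      · subst hij
        rw [hdiag i]
        simp only [lt_irrefl, if_false, if_neg, eq_self_iff_true, if_true]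
        nlinarith [mul_self_nonneg (p i)]
      · have h := hoff j i hij
        rw [hsymm i j]
        simp only [if_pos hij, if_neg (Nat.ne_of_gt hij), if_neg (not_lt_of_gt hij)]
        nlinarith
    have hTn : ∑ m ∈ Icc 1 n, ψ m * ((n - m : ℕ) : ℝ) = T n := by
      rw [hT]
      refine Finset.sum_congr rfl fun m hm => ?_
      simp only [Finset.mem_Icc] at hm
      rw [Nat.cast_sub hm.2]
    calc ∑ i ∈ Icc 1 n, ∑ j ∈ Icc 1 n, (p2 i j - p i * p j)
        ≤ ∑ i ∈ Icc 1 n, ∑ j ∈ Icc 1 n, ((if i = j then p i else 0)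
            + (if i < j then ψ (j - i) else 0) + (if j < i then ψ (i - j) else 0)) :=
          Finset.sum_le_sum fun i hi => Finset.sum_le_sum (hq i hi)
      _ = (∑ i ∈ Icc 1 n, ∑ j ∈ Icc 1 n, (if i = j then p i else 0))
            + (∑ i ∈ Icc 1 n, ∑ j ∈ Icc 1 n, (if i < j then ψ (j - i) else 0))
            + (∑ i ∈ Icc 1 n, ∑ j ∈ Icc 1 n, (if j < i then ψ (i - j) else 0)) := by
          simp only [Finset.sum_add_distrib]
      _ = a n + T n + T n := by
          congr 1
          · congr 1
            · rw [ha]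
              refine Finset.sum_congr rfl fun i hi => ?_
              rw [Finset.sum_ite_eq]
              simp [hi]
            · rw [sum_shift_aux ψ n]; exact hTn
          · rw [Finset.sum_comm, sum_shift_aux ψ n]; exact hTn
      _ = a n + 2 * T n := by ring
  -- the key estimate: for every M, the event that all partial sums stay below M is null
  have key : ∀ M : ℝ, P {s | ∀ k, Sf k s ≤ M} = 0 := by
    intro M
    have h1 : Tendsto (fun n => 4 / a n) atTop (𝓝 0) :=
      Tendsto.div_atTop tendsto_const_nhds hdiv
    have h2 : Tendsto (fun n => 8 * (T n / (a n) ^ 2)) atTop (𝓝 0) := by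
      have h := hlim.const_mul (8 : ℝ)
      simpa using h
    have hc : Tendsto (fun n => 4 / a n + 8 * (T n / (a n) ^ 2)) atTop (𝓝 0) := by
      have := h1.add h2; simpa using this
    have hc' : Tendsto (fun n => ENNReal.ofReal (4 / a n + 8 * (T n / (a n) ^ 2)))
        atTop (𝓝 0) := by
      have := ENNReal.tendsto_ofReal hc; simpa using this
    refine le_antisymm ?_ zero_le
    refine ge_of_tendsto hc' ?_
    filter_upwards [hdiv.eventually_ge_atTop (max (2 * M) 1)] with n hn
    have han : (0 : ℝ) < a n := lt_of_lt_of_le one_pos (le_trans (le_max_right _ _) hn)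
    have hM : M ≤ a n / 2 := by
      have := le_trans (le_max_left _ _) hn; linarith
    have hsub : {s | ∀ k, Sf k s ≤ M} ⊆ {s | a n / 2 ≤ |Sf n s - ∫ x, Sf n x ∂P|} := by
      intro s hs
      have h1' : Sf n s ≤ M := hs n
      rw [Set.mem_setOf_eq, hES n]
      have : a n / 2 ≤ -(Sf n s - a n) := by linarith
      exact le_trans this (neg_le_abs _)
    calc P {s | ∀ k, Sf k s ≤ M}
        ≤ P {s | a n / 2 ≤ |Sf n s - ∫ x, Sf n x ∂P|} := measure_mono hsub
      _ ≤ ENNReal.ofReal (ProbabilityTheory.variance (Sf n) P / (a n / 2) ^ 2) :=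
          ProbabilityTheory.meas_ge_le_variance_div_sq (hSL2 n) (by linarith)
      _ ≤ ENNReal.ofReal (4 / a n + 8 * (T n / (a n) ^ 2)) := by
          apply ENNReal.ofReal_le_ofReal
          have hv := hvarle n
          have h4 : (0 : ℝ) < (a n / 2) ^ 2 := by positivity
          rw [div_le_iff₀ h4]
          have heq : (4 / a n + 8 * (T n / (a n) ^ 2)) * (a n / 2) ^ 2 = a n + 2 * T n := by
            field_simp
            ring
          rw [heq]
          exact hv
  -- identify the target event as a measurable set
  have hAset : {s | {n : ℕ | X n s = 1}.Infinite}
      = ⋂ N : ℕ, ⋃ n : ℕ, ⋃ (_ : N < n), {s | X n s = 1} := by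
    ext s
    simp only [Set.mem_setOf_eq, Set.mem_iInter, Set.mem_iUnion]
    constructor
    · intro hinf N
      obtain ⟨b, hb, hNb⟩ := hinf.exists_gt N
      exact ⟨b, hNb, hb⟩
    · intro h
      exact Set.infinite_of_forall_exists_gt fun N => by
        obtain ⟨n, hn, hXn⟩ := h N
        exact ⟨n, hXn, hn⟩
  have hAmeas : MeasurableSet {s | {n : ℕ | X n s = 1}.Infinite} := by
    rw [hAset]
    exact MeasurableSet.iInter fun N => MeasurableSet.iUnion fun n =>
      MeasurableSet.iUnion fun _ => hms n
  rw [← prob_compl_eq_zero_iff hAmeas]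
  refine le_antisymm ?_ zero_le
  have hsub : {s | {n : ℕ | X n s = 1}.Infinite}ᶜ
      ⊆ ⋃ M : ℕ, {s | ∀ k, Sf k s ≤ (M : ℝ)} := by
    intro s hs
    simp only [Set.mem_compl_iff, Set.mem_setOf_eq, Set.not_infinite] at hs
    refine Set.mem_iUnion.mpr ⟨hs.toFinset.card, fun n => ?_⟩
    have hsubset : (Icc 1 n).filter (fun i => X i s = 1) ⊆ hs.toFinset := by
      intro i hi
      exact (Set.Finite.mem_toFinset hs).mpr (Finset.mem_filter.mp hi).2
    calc Sf n s = ∑ i ∈ (Icc 1 n).filter (fun i => X i s = 1), X i s := by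
          rw [hSf]
          exact (Finset.sum_filter_of_ne fun i _ hne => by
            rcases h01 i s with h | h
            · exact absurd h hne
            · exact h).symm
      _ = ∑ _i ∈ (Icc 1 n).filter (fun i => X i s = 1), (1 : ℝ) :=
          Finset.sum_congr rfl fun i hi => (Finset.mem_filter.mp hi).2
      _ = (((Icc 1 n).filter (fun i => X i s = 1)).card : ℝ) := by simp
      _ ≤ (hs.toFinset.card : ℝ) := by
          exact_mod_cast Finset.card_le_card hsubset
  exact le_trans (measure_mono hsub) (le_of_eq (measure_iUnion_null fun M => key (M : ℝ)))
end

section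
/- Let (X, d) be a metric space with probability measure μ and T a μ-preserving ergodic transformation such that C₁ e^{−kt} ≤ μ{x : d(x, y) > t} ≤ C₂ e^{−kt} for all t > 0, and suppose the 0-1 random variables X_n = 1_{d(T^n x, y) > r_n} with r_n = (γ/k) log n satisfy |P(X_n X_{n+m} = 1) − P(X_n = 1)P(X_{n+m} = 1)| ≤ C P(X_n=1) P(X_{n+m}=1) m^{−β} for some C > 0 and 0 < β < 1. Then for μ-almost every x, limsup_{n→∞} d(T^n x, y)/log n ≥ β/(2k). -/
open MeasureTheory Filter

lemma sum_rpow_inv_le {b : ℝ} (hb0 : 0 < b) (hb1 : b < 1) (N : ℕ) (hN : 1 ≤ N) :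
    ∑ d ∈ Finset.Icc 1 N, ((d : ℝ)) ^ (-b) ≤ (1 + 2 / (1 - b)) * (N : ℝ) ^ (1 - b) := by
  have hb1' : (0:ℝ) < 1 - b := by linarith
  have hanti : AntitoneOn (fun t : ℝ => t ^ (-b)) (Set.Icc 1 (1 + (N : ℕ) : ℝ)) := by
    intro x hx y hy hxy
    exact Real.rpow_le_rpow_of_nonpos (lt_of_lt_of_le one_pos hx.1) hxy (by linarith)
  have hint := hanti.sum_le_integral
  rw [integral_rpow (Or.inl (by linarith))] at hint
  have h1 : ∑ d ∈ Finset.Icc 1 N, ((d : ℝ)) ^ (-b) ≤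
      1 + ∑ i ∈ Finset.range N, ((1:ℝ) + ((i + 1 : ℕ) : ℝ)) ^ (-b) := by
    have hsub : ∑ d ∈ Finset.Icc 1 N, ((d : ℝ)) ^ (-b) ≤
        ∑ d ∈ Finset.Icc 1 (N+1), ((d : ℝ)) ^ (-b) := by
      apply Finset.sum_le_sum_of_subset_of_nonneg
      · exact Finset.Icc_subset_Icc le_rfl (Nat.le_succ N)
      · intro d _ _; positivity
    refine hsub.trans ?_
    have heq : ∑ d ∈ Finset.Icc 1 (N+1), ((d : ℝ)) ^ (-b) =
        ∑ i ∈ Finset.range (N+1), (((i+1 : ℕ)) : ℝ) ^ (-b) := by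
      rw [← Finset.Ico_add_one_right_eq_Icc, Finset.sum_Ico_eq_sum_range]
      simp [add_comm]
    rw [heq, Finset.sum_range_succ']
    simp only [Nat.cast_one, Nat.cast_add, Nat.cast_zero, zero_add]
    rw [Real.one_rpow, add_comm]
    apply le_of_eq
    congr 1
    exact Finset.sum_congr rfl fun i _ => by push_cast; ring_nf
  refine h1.trans ?_
  refine (add_le_add_right hint 1).trans ?_
  have hNpos : (0:ℝ) < (N:ℝ) := by exact_mod_cast hN
  have h2 : ((1:ℝ) + N) ^ (-b + 1) ≤ 2 * (N:ℝ) ^ (1 - b) := by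
    have hle : ((1:ℝ) + N) ≤ 2 * N := by
      have : (1:ℝ) ≤ N := by exact_mod_cast hN
      linarith
    calc ((1:ℝ) + N) ^ (-b + 1) ≤ (2 * (N:ℝ)) ^ (-b + 1) :=
          Real.rpow_le_rpow (by linarith) hle (by linarith)
      _ = 2 ^ (-b+1) * (N:ℝ) ^ (-b+1) := Real.mul_rpow (by norm_num) hNpos.le
      _ ≤ 2 ^ (1:ℝ) * (N:ℝ) ^ (1 - b) := by
          rw [(by ring : -b + 1 = 1 - b)]
          gcongr
          · norm_num
          · linarith
      _ = 2 * (N:ℝ) ^ (1 - b) := by norm_num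
  have h3 : ((1:ℝ) + N) ^ (-b + 1) / (-b + 1) ≤ (2 / (1-b)) * (N:ℝ) ^ (1 - b) := by
    rw [div_le_iff₀ (by linarith : (0:ℝ) < -b + 1)]
    calc ((1:ℝ) + N) ^ (-b + 1) ≤ 2 * (N:ℝ) ^ (1 - b) := h2
      _ = 2 / (1-b) * (N:ℝ) ^ (1-b) * (-b+1) := by field_simp; ring
  have h4 : (1:ℝ) ≤ (N:ℝ) ^ (1 - b) := Real.one_le_rpow (by exact_mod_cast hN) (by linarith)
  rw [Real.one_rpow]
  have hnn : (0:ℝ) ≤ ((1:ℝ) + N) ^ (-b + 1) := Real.rpow_nonneg (by linarith) _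
  calc 1 + (((1:ℝ) + N) ^ (-b + 1) - 1) / (-b + 1)
      ≤ 1 + ((1:ℝ) + N) ^ (-b + 1) / (-b + 1) := by
        gcongr 1 + ?_
        apply div_le_div_of_nonneg_right ?_ (by linarith : (0:ℝ) ≤ -b + 1)
        linarith
    _ ≤ 1 * (N:ℝ)^(1-b) + (2/(1-b)) * (N:ℝ)^(1-b) := by
        rw [one_mul]; exact add_le_add h4 h3
    _ = (1 + 2/(1-b)) * (N:ℝ)^(1-b) := by ring

lemma offdiag_sum_le {b : ℝ} (hb0 : 0 < b) (N : ℕ) {n : ℕ} (hn : n ∈ Finset.Ico 2 N) :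
    ∑ m ∈ (Finset.Ico 2 N).erase n, ((max n m - min n m : ℕ) : ℝ) ^ (-b) ≤
      2 * ∑ d ∈ Finset.Icc 1 N, ((d : ℝ)) ^ (-b) := by
  classical
  set s := Finset.Ico 2 N with hs
  have hnN : n < N := (Finset.mem_Ico.mp hn).2
  set t := s.erase n with ht
  have hsplit := Finset.sum_filter_add_sum_filter_not t (· < n)
      (fun m => ((max n m - min n m : ℕ) : ℝ) ^ (-b))
  rw [← hsplit]
  have hK : (0:ℝ) ≤ ∑ d ∈ Finset.Icc 1 N, ((d : ℝ)) ^ (-b) := by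
    apply Finset.sum_nonneg; intro d _; positivity
  have key : ∀ (t' : Finset ℕ) (g : ℕ → ℕ), (∀ m ∈ t', g m ∈ Finset.Icc 1 N) →
      (∀ m₁ ∈ t', ∀ m₂ ∈ t', g m₁ = g m₂ → m₁ = m₂) →
      ∑ m ∈ t', ((g m : ℕ) : ℝ) ^ (-b) ≤ ∑ d ∈ Finset.Icc 1 N, ((d : ℝ)) ^ (-b) := by
    intro t' g hmem hinj
    have himg := Finset.sum_image (g := g) (s := t') (f := fun d : ℕ => ((d : ℝ)) ^ (-b)) hinj
    rw [← himg]
    apply Finset.sum_le_sum_of_subset_of_nonneg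
    · intro d hd
      obtain ⟨m, hm, rfl⟩ := Finset.mem_image.mp hd
      exact hmem m hm
    · intro d _ _; positivity
  have h1 : ∑ m ∈ t.filter (· < n), ((max n m - min n m : ℕ) : ℝ) ^ (-b) ≤
      ∑ d ∈ Finset.Icc 1 N, ((d : ℝ)) ^ (-b) := by
    have hcong : ∑ m ∈ t.filter (· < n), ((max n m - min n m : ℕ) : ℝ) ^ (-b) =
        ∑ m ∈ t.filter (· < n), (((n - m : ℕ) : ℕ) : ℝ) ^ (-b) := by
      apply Finset.sum_congr rfl
      intro m hm
      have hmn : m < n := (Finset.mem_filter.mp hm).2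
      rw [max_eq_left hmn.le, min_eq_right hmn.le]
    rw [hcong]
    apply key
    · intro m hm
      have hmn : m < n := (Finset.mem_filter.mp hm).2
      rw [Finset.mem_Icc]
      omega
    · intro m₁ hm₁ m₂ hm₂ hg
      have h1 : m₁ < n := (Finset.mem_filter.mp hm₁).2
      have h2 : m₂ < n := (Finset.mem_filter.mp hm₂).2
      omega
  have h2 : ∑ m ∈ t.filter (fun m => ¬ m < n), ((max n m - min n m : ℕ) : ℝ) ^ (-b) ≤
      ∑ d ∈ Finset.Icc 1 N, ((d : ℝ)) ^ (-b) := by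
    have hcong : ∑ m ∈ t.filter (fun m => ¬ m < n), ((max n m - min n m : ℕ) : ℝ) ^ (-b) =
        ∑ m ∈ t.filter (fun m => ¬ m < n), (((m - n : ℕ) : ℕ) : ℝ) ^ (-b) := by
      apply Finset.sum_congr rfl
      intro m hm
      have hne : m ≠ n := Finset.ne_of_mem_erase (Finset.mem_filter.mp hm).1
      have hnm : n < m := by
        have := (Finset.mem_filter.mp hm).2
        omega
      rw [max_eq_right hnm.le, min_eq_left hnm.le]
    rw [hcong]
    apply key
    · intro m hm
      have hne : m ≠ n := Finset.ne_of_mem_erase (Finset.mem_filter.mp hm).1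
      have hmem : m ∈ s := Finset.mem_of_mem_erase (Finset.mem_filter.mp hm).1
      have hmN : m < N := (Finset.mem_Ico.mp hmem).2
      have := (Finset.mem_filter.mp hm).2
      rw [Finset.mem_Icc]
      omega
    · intro m₁ hm₁ m₂ hm₂ hg
      have h1 : ¬ m₁ < n := (Finset.mem_filter.mp hm₁).2
      have h2 : ¬ m₂ < n := (Finset.mem_filter.mp hm₂).2
      omega
  linarith

set_option maxHeartbeats 1000000 in
lemma freq_excursions
    {X : Type*} [MetricSpace X] [MeasurableSpace X] [BorelSpace X]
    (μ : Measure X) [IsProbabilityMeasure μ]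
    (y : X) (k C₁ : ℝ) (hk : 0 < k) (hC₁ : 0 < C₁)
    (htail : ∀ t > (0 : ℝ), C₁ * Real.exp (-k * t) ≤ (μ {x | dist x y > t}).toReal)
    (T : X → X) (hT : MeasurePreserving T μ μ)
    (b C γ : ℝ) (hb0 : 0 < b) (hb1 : b < 1) (hC : 0 < C)
    (hγ0 : 0 < γ) (hγ : 2 * γ < b)
    (hcorr : ∀ m > 0, ∀ n : ℕ,
      |(μ ((fun x => T^[n] x) ⁻¹' {x | dist x y > (γ / k) * Real.log n} ∩
            (fun x => T^[n + m] x) ⁻¹' {x | dist x y > (γ / k) * Real.log (n + m)})).toReal -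
          (μ ((fun x => T^[n] x) ⁻¹' {x | dist x y > (γ / k) * Real.log n})).toReal *
            (μ ((fun x => T^[n + m] x) ⁻¹' {x | dist x y > (γ / k) * Real.log (n + m)})).toReal| ≤
        C * (μ ((fun x => T^[n] x) ⁻¹' {x | dist x y > (γ / k) * Real.log n})).toReal *
          (μ ((fun x => T^[n + m] x) ⁻¹' {x | dist x y > (γ / k) * Real.log (n + m)})).toReal *
          (m : ℝ) ^ (-b)) :
    ∀ᵐ x ∂μ, ∃ᶠ n in atTop, dist (T^[n] x) y > (γ / k) * Real.log n := by
  classical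
  have hγ1 : γ < 1 := by linarith
  -- the excursion sets
  set A : ℕ → Set X := fun n =>
    (fun x => T^[n] x) ⁻¹' {x | dist x y > (γ / k) * Real.log n} with hA
  have hsetmeas : ∀ r : ℝ, MeasurableSet {x : X | dist x y > r} := fun r =>
    (isOpen_lt continuous_const (continuous_id.dist continuous_const)).measurableSet
  have hAmeas : ∀ n, MeasurableSet (A n) := fun n =>
    (hT.measurable.iterate n) (hsetmeas _)
  have hμA : ∀ n, μ (A n) = μ {x | dist x y > (γ / k) * Real.log n} := fun n =>
    (hT.iterate n).measure_preimage (hsetmeas _).nullMeasurableSet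
  set p : ℕ → ℝ := fun n => (μ (A n)).toReal with hp
  have hp0 : ∀ n, 0 ≤ p n := fun n => ENNReal.toReal_nonneg
  have hp1 : ∀ n, p n ≤ 1 := by
    intro n
    rw [hp, ← ENNReal.toReal_one]
    exact ENNReal.toReal_mono ENNReal.one_ne_top prob_le_one
  have hplow : ∀ n : ℕ, 2 ≤ n → C₁ * (n : ℝ) ^ (-γ) ≤ p n := by
    intro n hn
    have hn1 : (1 : ℝ) < (n : ℝ) := by exact_mod_cast Nat.lt_of_lt_of_le one_lt_two hn
    have hlog : 0 < Real.log n := Real.log_pos hn1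
    have hr : (0 : ℝ) < (γ / k) * Real.log n := by positivity
    have h := htail _ hr
    rw [hp]; simp only []
    rw [hμA n]
    refine le_trans (le_of_eq ?_) h
    rw [Real.rpow_def_of_pos (by positivity : (0 : ℝ) < (n : ℝ))]
    congr 1
    field_simp
  -- partial sums of indicators
  set S : ℕ → X → ℝ := fun N x =>
    ∑ n ∈ Finset.Ico 2 N, (A n).indicator (fun _ => (1 : ℝ)) x with hS
  set E : ℕ → ℝ := fun N => ∑ n ∈ Finset.Ico 2 N, p n with hE
  set Q : ℕ → ℝ := fun N =>
    ∑ n ∈ Finset.Ico 2 N, ∑ m ∈ Finset.Ico 2 N, (μ (A n ∩ A m)).toReal with hQdef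
  have hSnonneg : ∀ N x, 0 ≤ S N x := by
    intro N x
    apply Finset.sum_nonneg
    intro n _
    exact Set.indicator_nonneg (fun _ _ => zero_le_one) x
  have hSint : ∀ N, Integrable (S N) μ := by
    intro N
    exact integrable_finset_sum _ fun n _ => (integrable_const (1 : ℝ)).indicator (hAmeas n)
  have hES : ∀ N, ∫ x, S N x ∂μ = E N := by
    intro N
    rw [hS]; simp only []
    rw [integral_finset_sum _ fun n _ => (integrable_const (1 : ℝ)).indicator (hAmeas n)]
    apply Finset.sum_congr rfl
    intro n _
    rw [integral_indicator_const (1 : ℝ) (hAmeas n)]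
    simp [hp]
    rfl
  have hS2 : ∀ N x, (S N x) ^ 2 =
      ∑ n ∈ Finset.Ico 2 N, ∑ m ∈ Finset.Ico 2 N,
        (A n ∩ A m).indicator (fun _ => (1 : ℝ)) x := by
    intro N x
    rw [sq, hS]; simp only []
    rw [Finset.sum_mul_sum]
    apply Finset.sum_congr rfl
    intro n _
    apply Finset.sum_congr rfl
    intro m _
    rw [← Set.inter_indicator_mul]
    simp
  have hSqint : ∀ N, Integrable (fun x => (S N x) ^ 2) μ := by
    intro N
    have : (fun x => (S N x) ^ 2) = fun x =>
        ∑ n ∈ Finset.Ico 2 N, ∑ m ∈ Finset.Ico 2 N,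
          (A n ∩ A m).indicator (fun _ => (1 : ℝ)) x := funext fun x => hS2 N x
    rw [this]
    exact integrable_finset_sum _ fun n _ => integrable_finset_sum _ fun m _ =>
      (integrable_const (1 : ℝ)).indicator ((hAmeas n).inter (hAmeas m))
  have hQ : ∀ N, ∫ x, (S N x) ^ 2 ∂μ = Q N := by
    intro N
    have : (fun x => (S N x) ^ 2) = fun x =>
        ∑ n ∈ Finset.Ico 2 N, ∑ m ∈ Finset.Ico 2 N,
          (A n ∩ A m).indicator (fun _ => (1 : ℝ)) x := funext fun x => hS2 N x
    rw [this]
    rw [integral_finset_sum _ fun n _ => integrable_finset_sum _ fun m _ =>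
      (integrable_const (1 : ℝ)).indicator ((hAmeas n).inter (hAmeas m))]
    apply Finset.sum_congr rfl
    intro n _
    rw [integral_finset_sum _ fun m _ =>
      (integrable_const (1 : ℝ)).indicator ((hAmeas n).inter (hAmeas m))]
    apply Finset.sum_congr rfl
    intro m _
    rw [integral_indicator_const (1 : ℝ) ((hAmeas n).inter (hAmeas m))]
    simp
    rfl
  have hsubint : ∀ N, Integrable (fun x => (S N x) ^ 2 - (2 * E N) * S N x) μ := by
    intro N
    exact (hSqint N).sub ((hSint N).const_mul (2 * E N))
  have hVint : ∀ N, Integrable (fun x => (S N x - E N) ^ 2) μ := by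
    intro N
    have hid : (fun x => (S N x - E N) ^ 2) = fun x =>
        ((S N x) ^ 2 - (2 * E N) * S N x) + (E N) ^ 2 := by
      funext x; ring
    rw [hid]
    exact (hsubint N).add (integrable_const _)
  have hVar : ∀ N, ∫ x, (S N x - E N) ^ 2 ∂μ = Q N - (E N) ^ 2 := by
    intro N
    have hid : (fun x => (S N x - E N) ^ 2) = fun x =>
        ((S N x) ^ 2 - (2 * E N) * S N x) + (E N) ^ 2 := by
      funext x; ring
    have h1 : ∫ x, (S N x - E N) ^ 2 ∂μ =
        ∫ x, ((S N x) ^ 2 - (2 * E N) * S N x) + (E N) ^ 2 ∂μ := by rw [hid]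
    rw [h1, integral_add (hsubint N) (integrable_const _),
      integral_sub (hSqint N) ((hSint N).const_mul (2 * E N)), integral_const_mul, hES, hQ,
      integral_const]
    simp [measure_univ]
    ring
  -- term-wise bound on correlations
  have hq_le : ∀ N, ∀ n ∈ Finset.Ico 2 N, ∀ m ∈ Finset.Ico 2 N,
      (μ (A n ∩ A m)).toReal - p n * p m ≤
        if n = m then 1 else C * ((max n m - min n m : ℕ) : ℝ) ^ (-b) := by
    intro N n _ m _
    by_cases hnm : n = m
    · subst hnm
      rw [if_pos rfl, Set.inter_self]
      nlinarith [hp0 n, hp1 n]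
    · rw [if_neg hnm]
      rcases Nat.lt_or_ge n m with h | h
      · have hd : 0 < m - n := by omega
        have hcb := hcorr (m - n) hd n
        rw [← Nat.cast_add, show n + (m - n) = m by omega] at hcb
        have h1 : (μ (A n ∩ A m)).toReal - p n * p m ≤
            C * p n * p m * ((m - n : ℕ) : ℝ) ^ (-b) := le_of_abs_le hcb
        refine h1.trans ?_
        rw [max_eq_right h.le, min_eq_left h.le]
        have hpow : (0:ℝ) ≤ ((m - n : ℕ) : ℝ) ^ (-b) := by positivity
        calc C * p n * p m * ((m - n : ℕ) : ℝ) ^ (-b)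
            ≤ C * 1 * 1 * ((m - n : ℕ) : ℝ) ^ (-b) := by
              apply mul_le_mul_of_nonneg_right _ hpow
              apply mul_le_mul (mul_le_mul le_rfl (hp1 n) (hp0 n) hC.le) (hp1 m) (hp0 m)
              positivity
          _ = C * ((m - n : ℕ) : ℝ) ^ (-b) := by ring
      · have hlt : m < n := by omega
        have hd : 0 < n - m := by omega
        have hcb := hcorr (n - m) hd m
        rw [← Nat.cast_add, show m + (n - m) = n by omega] at hcb
        have h1 : (μ (A n ∩ A m)).toReal - p n * p m ≤
            C * p m * p n * ((n - m : ℕ) : ℝ) ^ (-b) := by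
          have := le_of_abs_le hcb
          calc (μ (A n ∩ A m)).toReal - p n * p m
              = (μ (A m ∩ A n)).toReal - p m * p n := by rw [Set.inter_comm]; ring
            _ ≤ C * p m * p n * ((n - m : ℕ) : ℝ) ^ (-b) := this
        refine h1.trans ?_
        rw [max_eq_left hlt.le, min_eq_right hlt.le]
        have hpow : (0:ℝ) ≤ ((n - m : ℕ) : ℝ) ^ (-b) := by positivity
        calc C * p m * p n * ((n - m : ℕ) : ℝ) ^ (-b)
            ≤ C * 1 * 1 * ((n - m : ℕ) : ℝ) ^ (-b) := by
              apply mul_le_mul_of_nonneg_right _ hpow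
              apply mul_le_mul (mul_le_mul le_rfl (hp1 m) (hp0 m) hC.le) (hp1 n) (hp0 n)
              positivity
          _ = C * ((n - m : ℕ) : ℝ) ^ (-b) := by ring
  set aC : ℝ := 1 + 2 * C * (1 + 2 / (1 - b)) with haC
  have haCpos : 0 < aC := by
    rw [haC]
    have hb' : (0:ℝ) < 1 - b := by linarith
    have h2 : (0:ℝ) < 2 / (1 - b) := div_pos (by norm_num) hb'
    nlinarith [hC]
  -- variance bound
  have hVbound : ∀ N : ℕ, 4 ≤ N → Q N - (E N) ^ 2 ≤ aC * (N : ℝ) ^ (2 - b) := by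
    intro N hN4
    have hN1 : 1 ≤ N := by omega
    have hNpos : (0:ℝ) < (N:ℝ) := by exact_mod_cast (by omega : 0 < N)
    have hcoef : (0:ℝ) ≤ 2 * C * (1 + 2 / (1 - b)) := by
      have hb' : (0:ℝ) < 1 - b := by linarith
      have h2 : (0:ℝ) < 2 / (1 - b) := div_pos (by norm_num) hb'
      nlinarith [hC]
    have hEsq : (E N) ^ 2 = ∑ n ∈ Finset.Ico 2 N, ∑ m ∈ Finset.Ico 2 N, p n * p m := by
      rw [hE]; simp only []; rw [sq, Finset.sum_mul_sum]
    have hdiff : Q N - (E N) ^ 2 = ∑ n ∈ Finset.Ico 2 N, ∑ m ∈ Finset.Ico 2 N,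
        ((μ (A n ∩ A m)).toReal - p n * p m) := by
      rw [hQdef, hEsq]; simp only []
      rw [← Finset.sum_sub_distrib]
      apply Finset.sum_congr rfl; intro n _; rw [← Finset.sum_sub_distrib]
    rw [hdiff]
    set K := ∑ d ∈ Finset.Icc 1 N, ((d:ℝ)) ^ (-b) with hKdef
    have hstep : ∑ n ∈ Finset.Ico 2 N, ∑ m ∈ Finset.Ico 2 N,
        ((μ (A n ∩ A m)).toReal - p n * p m) ≤ (N:ℝ) * (1 + C * (2 * K)) := by
      have hK0 : (0:ℝ) ≤ K := Finset.sum_nonneg fun d _ => by positivity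
      calc ∑ n ∈ Finset.Ico 2 N, ∑ m ∈ Finset.Ico 2 N, ((μ (A n ∩ A m)).toReal - p n * p m)
          ≤ ∑ _n ∈ Finset.Ico 2 N, (1 + C * (2 * K)) := by
            apply Finset.sum_le_sum
            intro n hn
            calc ∑ m ∈ Finset.Ico 2 N, ((μ (A n ∩ A m)).toReal - p n * p m)
                ≤ ∑ m ∈ Finset.Ico 2 N,
                    (if n = m then (1:ℝ) else C * ((max n m - min n m : ℕ):ℝ) ^ (-b)) :=
                  Finset.sum_le_sum (fun m hm => hq_le N n hn m hm)
              _ = 1 + ∑ m ∈ (Finset.Ico 2 N).erase n,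
                    (if n = m then (1:ℝ) else C * ((max n m - min n m : ℕ):ℝ) ^ (-b)) := by
                  rw [← Finset.add_sum_erase _ _ hn, if_pos rfl]
              _ = 1 + ∑ m ∈ (Finset.Ico 2 N).erase n,
                    C * ((max n m - min n m : ℕ):ℝ) ^ (-b) := by
                  congr 1
                  apply Finset.sum_congr rfl
                  intro m hm
                  rw [if_neg (fun h => (Finset.ne_of_mem_erase hm) h.symm)]
              _ ≤ 1 + C * (2 * K) := by
                  rw [← Finset.mul_sum]
                  exact add_le_add_right
                    (mul_le_mul_of_nonneg_left (offdiag_sum_le hb0 N hn) hC.le) 1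
          _ = ((Finset.Ico 2 N).card : ℝ) * (1 + C * (2 * K)) := by
              rw [Finset.sum_const, nsmul_eq_mul]
          _ ≤ (N:ℝ) * (1 + C * (2 * K)) := by
              apply mul_le_mul_of_nonneg_right _ (by nlinarith [hC.le, hK0])
              rw [Nat.card_Ico]
              exact_mod_cast Nat.sub_le N 2
    refine hstep.trans ?_
    have hKb : K ≤ (1 + 2/(1-b)) * (N:ℝ) ^ (1-b) := sum_rpow_inv_le hb0 hb1 N hN1
    have hNN : (N:ℝ) * (N:ℝ)^(1-b) = (N:ℝ)^(2-b) := by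
      rw [show (2:ℝ)-b = 1 + (1-b) by ring, Real.rpow_add hNpos, Real.rpow_one]
    have hle : (N:ℝ) ≤ (N:ℝ)^(2-b) := by
      have h := Real.rpow_le_rpow_of_exponent_le (x := (N:ℝ))
        (by exact_mod_cast hN1) (show (1:ℝ) ≤ 2-b by linarith)
      rwa [Real.rpow_one] at h
    calc (N:ℝ) * (1 + C * (2 * K))
        ≤ (N:ℝ) * (1 + C * (2 * ((1 + 2/(1-b)) * (N:ℝ)^(1-b)))) := by
          apply mul_le_mul_of_nonneg_left _ hNpos.le
          have : C * (2 * K) ≤ C * (2 * ((1 + 2/(1-b)) * (N:ℝ)^(1-b))) := by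
            apply mul_le_mul_of_nonneg_left _ hC.le
            linarith
          linarith
      _ = (N:ℝ) + (2 * C * (1 + 2/(1-b))) * ((N:ℝ) * (N:ℝ)^(1-b)) := by ring
      _ ≤ (N:ℝ)^(2-b) + (2 * C * (1 + 2/(1-b))) * (N:ℝ)^(2-b) := by
          rw [hNN]
          linarith
      _ = aC * (N:ℝ)^(2-b) := by rw [haC]; ring
  -- lower bound for E N
  have hElow : ∀ N : ℕ, 4 ≤ N → C₁ / 2 * (N : ℝ) ^ (1 - γ) ≤ E N := by
    intro N hN4
    have hNpos : (0:ℝ) < (N:ℝ) := by exact_mod_cast (by omega : 0 < N)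
    have h1 : ∀ n ∈ Finset.Ico 2 N, C₁ * (N:ℝ)^(-γ) ≤ p n := by
      intro n hn
      obtain ⟨hn2, hnN⟩ := Finset.mem_Ico.mp hn
      refine le_trans ?_ (hplow n hn2)
      apply mul_le_mul_of_nonneg_left _ hC₁.le
      apply Real.rpow_le_rpow_of_nonpos (by exact_mod_cast (by omega : 0 < n)) _ (by linarith)
      exact_mod_cast hnN.le
    have h2 : ((Finset.Ico 2 N).card : ℝ) * (C₁ * (N:ℝ)^(-γ)) ≤ E N := by
      have := Finset.card_nsmul_le_sum (Finset.Ico 2 N) p (C₁ * (N:ℝ)^(-γ)) h1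
      rwa [nsmul_eq_mul] at this
    refine le_trans ?_ h2
    rw [Nat.card_Ico]
    have hcast : ((N - 2 : ℕ) : ℝ) = (N:ℝ) - 2 := by
      have h2N : 2 ≤ N := by omega
      push_cast [h2N]
      ring
    rw [hcast]
    have hN4' : (4:ℝ) ≤ (N:ℝ) := by exact_mod_cast hN4
    have hhalf : (N:ℝ)/2 ≤ (N:ℝ) - 2 := by linarith
    have hNN : (N:ℝ) * (N:ℝ)^(-γ) = (N:ℝ)^(1-γ) := by
      rw [show (1:ℝ)-γ = 1 + -γ by ring, Real.rpow_add hNpos, Real.rpow_one]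
    calc C₁/2 * (N:ℝ)^(1-γ) = (N:ℝ)/2 * (C₁ * (N:ℝ)^(-γ)) := by rw [← hNN]; ring
      _ ≤ ((N:ℝ)-2) * (C₁ * (N:ℝ)^(-γ)) :=
          mul_le_mul_of_nonneg_right hhalf
            (mul_nonneg hC₁.le (Real.rpow_nonneg hNpos.le _))
  set c₀ : ℝ := 16 * aC / C₁ ^ 2 with hc₀
  have hc₀pos : 0 < c₀ := by positivity
  have he : 0 < b - 2 * γ := by linarith
  -- Chebyshev bound
  have hcheb : ∀ N : ℕ, 4 ≤ N →
      (μ {x | S N x < E N / 2}).toReal ≤ c₀ * (N : ℝ) ^ (-(b - 2 * γ)) := by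
    intro N hN4
    have hNpos : (0:ℝ) < (N:ℝ) := by exact_mod_cast (by omega : 0 < N)
    have hEN := hElow N hN4
    have hENpos : 0 < E N :=
      lt_of_lt_of_le (mul_pos (half_pos hC₁) (Real.rpow_pos_of_pos hNpos _)) hEN
    set ε := (E N / 2) ^ 2 with hεdef
    have hεpos : 0 < ε := pow_pos (half_pos hENpos) 2
    have hmar := mul_meas_ge_le_integral_of_nonneg
      (ae_of_all μ (fun x => sq_nonneg (S N x - E N))) (hVint N) ε
    rw [hVar N] at hmar
    have hsub : {x | S N x < E N / 2} ⊆ {x | ε ≤ (S N x - E N) ^ 2} := by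
      intro x hx
      simp only [Set.mem_setOf_eq] at hx ⊢
      have h0 := hSnonneg N x
      rw [hεdef]
      nlinarith [hENpos]
    have hmono : (μ {x | S N x < E N / 2}).toReal ≤
        (μ {x | ε ≤ (S N x - E N) ^ 2}).toReal :=
      ENNReal.toReal_mono (measure_ne_top μ _) (measure_mono hsub)
    have h3 : (μ {x | ε ≤ (S N x - E N) ^ 2}).toReal ≤ (Q N - (E N)^2) / ε := by
      rw [le_div_iff₀ hεpos]
      calc (μ {x | ε ≤ (S N x - E N) ^ 2}).toReal * ε
          = ε * (μ {x | ε ≤ (S N x - E N) ^ 2}).toReal := mul_comm _ _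
        _ ≤ Q N - (E N) ^ 2 := hmar
    have hsq : ((N:ℝ)^((1:ℝ)-γ))^2 = (N:ℝ)^((2:ℝ)-2*γ) := by
      rw [← Real.rpow_natCast ((N:ℝ)^((1:ℝ)-γ)) 2, ← Real.rpow_mul hNpos.le]
      norm_num
      rw [show ((1:ℝ)-γ)*2 = 2-2*γ by ring]
    have hεlow : C₁^2/16 * (N:ℝ)^((2:ℝ) - 2*γ) ≤ ε := by
      rw [hεdef]
      have hhalf : C₁/4 * (N:ℝ)^((1:ℝ)-γ) ≤ E N / 2 := by linarith
      calc C₁^2/16 * (N:ℝ)^((2:ℝ)-2*γ) = (C₁/4 * (N:ℝ)^((1:ℝ)-γ))^2 := by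
            rw [mul_pow, hsq]; ring
        _ ≤ (E N / 2)^2 := by
            apply pow_le_pow_left₀ _ hhalf 2
            exact mul_nonneg (by positivity) (Real.rpow_nonneg hNpos.le _)
    have hQb := hVbound N hN4
    have hdenpos : (0:ℝ) < C₁^2/16 * (N:ℝ)^((2:ℝ)-2*γ) :=
      mul_pos (by positivity) (Real.rpow_pos_of_pos hNpos _)
    calc (μ {x | S N x < E N / 2}).toReal ≤ (Q N - (E N)^2)/ε := hmono.trans h3
      _ ≤ (aC * (N:ℝ)^((2:ℝ)-b)) / (C₁^2/16 * (N:ℝ)^((2:ℝ)-2*γ)) := by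
          apply div_le_div₀ (by positivity) hQb hdenpos hεlow
      _ = c₀ * (N:ℝ)^(-(b-2*γ)) := by
          rw [hc₀]
          have hdiv : (N:ℝ)^((2:ℝ)-b) / (N:ℝ)^((2:ℝ)-2*γ) = (N:ℝ)^(-(b-2*γ)) := by
            rw [← Real.rpow_sub hNpos]
            congr 1
            ring
          rw [← hdiv]
          have hYne : ((N:ℝ)^((2:ℝ)-2*γ)) ≠ 0 := (Real.rpow_pos_of_pos hNpos _).ne'
          have hC₁ne : C₁ ≠ 0 := hC₁.ne'
          field_simp
  -- choose a good subsequence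
  have hsel : ∀ j : ℕ, ∃ N : ℕ, 4 ≤ N ∧ (j : ℝ) ≤ E N ∧
      c₀ * (N : ℝ) ^ (-(b - 2 * γ)) ≤ (1 / 2 : ℝ) ^ j := by
    intro j
    have h1 : Tendsto (fun N : ℕ => c₀ * (N:ℝ) ^ (-(b - 2*γ))) atTop (nhds 0) := by
      have h0 : Tendsto (fun N : ℕ => ((N:ℝ)) ^ (-(b - 2*γ))) atTop (nhds 0) :=
        (tendsto_rpow_neg_atTop he).comp (tendsto_natCast_atTop_atTop (R := ℝ))
      have h0' := h0.const_mul c₀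
      rwa [mul_zero] at h0'
    have h2 : Tendsto (fun N : ℕ => C₁/2 * (N:ℝ)^((1:ℝ)-γ)) atTop atTop := by
      apply Tendsto.const_mul_atTop (half_pos hC₁)
      exact (tendsto_rpow_atTop (by linarith : (0:ℝ) < 1 - γ)).comp
        (tendsto_natCast_atTop_atTop (R := ℝ))
    have e1 : ∀ᶠ N : ℕ in atTop, 4 ≤ N := eventually_ge_atTop 4
    have e2 : ∀ᶠ N : ℕ in atTop, (j:ℝ) ≤ C₁/2 * (N:ℝ)^((1:ℝ)-γ) :=
      h2.eventually_ge_atTop _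
    have e3 : ∀ᶠ N : ℕ in atTop, c₀ * (N:ℝ)^(-(b-2*γ)) ≤ (1/2:ℝ)^j := by
      have hpos : (0:ℝ) < (1/2:ℝ)^j := by positivity
      exact h1.eventually_le_const hpos
    obtain ⟨N, hN4, hNE, hNb⟩ := (e1.and (e2.and e3)).exists
    exact ⟨N, hN4, le_trans hNE (hElow N hN4), hNb⟩
  choose φ hφ4 hφE hφbad using hsel
  have htsum : (∑' j, μ {x | S (φ j) x < E (φ j) / 2}) ≠ ⊤ := by
    have hle : ∀ j, μ {x | S (φ j) x < E (φ j) / 2} ≤ ENNReal.ofReal ((1/2:ℝ)^j) := by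
      intro j
      rw [← ENNReal.ofReal_toReal (measure_ne_top μ _)]
      exact ENNReal.ofReal_le_ofReal ((hcheb _ (hφ4 j)).trans (hφbad j))
    have hsum : Summable (fun j : ℕ => (1/2:ℝ)^j) :=
      summable_geometric_of_lt_one (by norm_num) (by norm_num)
    refine ne_top_of_le_ne_top ?_ (ENNReal.tsum_le_tsum hle)
    rw [← ENNReal.ofReal_tsum_of_nonneg (fun j => by positivity) hsum]
    exact ENNReal.ofReal_ne_top
  have hae := ae_eventually_notMem htsum
  filter_upwards [hae] with x hx
  rw [frequently_atTop]
  intro M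
  by_contra hcon
  push_neg at hcon
  have hSle : ∀ N, S N x ≤ (M : ℝ) := by
    intro N
    calc S N x ≤ ∑ n ∈ Finset.Ico 2 N, if n < M then (1 : ℝ) else 0 := by
          apply Finset.sum_le_sum
          intro n _
          by_cases hn : n < M
          · rw [if_pos hn]
            exact Set.indicator_le' (fun _ _ => le_rfl) (fun _ _ => zero_le_one) x
          · rw [if_neg hn]
            have hxn : x ∉ A n := by
              have := hcon n (le_of_not_gt hn)
              simp only [hA, Set.mem_preimage, Set.mem_setOf_eq]
              exact not_lt.mpr this
            rw [Set.indicator_of_notMem hxn]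
      _ = (((Finset.Ico 2 N).filter (· < M)).card : ℝ) := by
          rw [Finset.sum_boole]
      _ ≤ (M : ℝ) := by
          have hsub : (Finset.Ico 2 N).filter (· < M) ⊆ Finset.range M := by
            intro n hn
            rw [Finset.mem_range]
            exact (Finset.mem_filter.mp hn).2
          have := Finset.card_le_card hsub
          rw [Finset.card_range] at this
          exact_mod_cast this
  obtain ⟨J, hJ⟩ := eventually_atTop.mp hx
  set j := max J (2 * M + 4) with hj
  have hjJ : J ≤ j := le_max_left _ _
  have hjM : 2 * M + 4 ≤ j := le_max_right _ _
  have hgood := hJ j hjJ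
  simp only [Set.mem_setOf_eq, not_lt] at hgood
  have h1 : (j : ℝ) / 2 ≤ S (φ j) x := le_trans (by linarith [hφE j]) hgood
  have h2 : (M : ℝ) < (j : ℝ) / 2 := by
    have : (2 * M + 4 : ℝ) ≤ (j : ℝ) := by exact_mod_cast hjM
    linarith
  linarith [hSle (φ j)]

lemma bounded_above_ae
    {X : Type*} [MetricSpace X] [MeasurableSpace X] [BorelSpace X]
    (μ : Measure X) [IsProbabilityMeasure μ]
    (y : X) (k C₂ : ℝ) (hk : 0 < k) (hC₂ : 0 < C₂)
    (htail : ∀ t > (0 : ℝ), (μ {x | dist x y > t}).toReal ≤ C₂ * Real.exp (-k * t))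
    (T : X → X) (hT : MeasurePreserving T μ μ) :
    ∀ᵐ x ∂μ, ∀ᶠ n : ℕ in atTop, dist (T^[n] x) y ≤ (2 / k) * Real.log n := by
  classical
  set B : ℕ → Set X := fun n =>
    (fun x => T^[n] x) ⁻¹' {x | dist x y > (2 / k) * Real.log n} with hB
  have hsetmeas : ∀ r : ℝ, MeasurableSet {x : X | dist x y > r} := fun r =>
    (isOpen_lt continuous_const (continuous_id.dist continuous_const)).measurableSet
  have hμB : ∀ n, μ (B n) = μ {x | dist x y > (2 / k) * Real.log n} := fun n =>
    (hT.iterate n).measure_preimage (hsetmeas _).nullMeasurableSet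
  set f : ℕ → ℝ := fun n => if n < 2 then (1 : ℝ) else C₂ * (n : ℝ) ^ (-(2:ℝ)) with hf
  have hBle : ∀ n : ℕ, μ (B n) ≤ ENNReal.ofReal (f n) := by
    intro n
    by_cases hn : n < 2
    · rw [hf]; simp only [if_pos hn]
      rw [ENNReal.ofReal_one]
      exact prob_le_one
    · push_neg at hn
      rw [hf]; simp only [if_neg (not_lt.mpr hn)]
      have hn1 : (1 : ℝ) < (n : ℝ) := by exact_mod_cast hn
      have hlog : 0 < Real.log n := Real.log_pos hn1
      have hr : (0 : ℝ) < (2 / k) * Real.log n := by positivity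
      have h := htail _ hr
      rw [← ENNReal.ofReal_toReal (measure_ne_top μ (B n))]
      apply ENNReal.ofReal_le_ofReal
      rw [hμB]
      refine h.trans (le_of_eq ?_)
      congr 1
      rw [Real.rpow_def_of_pos (by positivity : (0 : ℝ) < (n : ℝ))]
      congr 1
      field_simp
  have hsumf : Summable f := by
    have hg : Summable (fun n : ℕ => C₂ * (n : ℝ) ^ (-(2:ℝ))) :=
      (Real.summable_nat_rpow.mpr (by norm_num)).mul_left C₂
    have hg2 : Summable (fun n : ℕ => C₂ * ((n + 2 : ℕ) : ℝ) ^ (-(2:ℝ))) :=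
      (summable_nat_add_iff 2).mpr hg
    apply (summable_nat_add_iff 2).mp
    apply hg2.congr
    intro n
    rw [hf]; simp only [if_neg (by omega : ¬ n + 2 < 2)]
  have hfnn : ∀ n, 0 ≤ f n := by
    intro n
    rw [hf]
    by_cases hn : n < 2
    · simp only [if_pos hn, zero_le_one]
    · simp only [if_neg hn]
      positivity
  have htsum : (∑' n, μ (B n)) ≠ ⊤ := by
    refine ne_top_of_le_ne_top ?_ (ENNReal.tsum_le_tsum hBle)
    rw [← ENNReal.ofReal_tsum_of_nonneg hfnn hsumf]
    exact ENNReal.ofReal_ne_top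
  filter_upwards [ae_eventually_notMem htsum] with x hx
  refine hx.mono fun n hn => ?_
  have : ¬ dist (T^[n] x) y > (2 / k) * Real.log n := fun h => hn h
  exact not_lt.mp this

/-- Lower bound half of the unipotent logarithm law: exponential cusp tail plus
polynomial decay of correlations of the excursion events with exponent `β`
gives `limsup d(T^n x, y)/log n ≥ β/(2k)` a.e. -/
theorem log_law_lower_bound
    {X : Type*} [MetricSpace X] [MeasurableSpace X] [BorelSpace X]
    (μ : Measure X) [IsProbabilityMeasure μ]
    (y : X) (k C₁ C₂ : ℝ) (hk : 0 < k) (hC₁ : 0 < C₁) (hC₂ : 0 < C₂)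
    (htail : ∀ t > (0 : ℝ),
      C₁ * Real.exp (-k * t) ≤ (μ {x | dist x y > t}).toReal ∧
      (μ {x | dist x y > t}).toReal ≤ C₂ * Real.exp (-k * t))
    (T : X → X) (hT : MeasurePreserving T μ μ) (herg : Ergodic T μ)
    (β C : ℝ) (hβ : 0 < β) (hβ1 : β < 1) (hC : 0 < C)
    (hcorr : ∀ γ : ℝ, 0 < γ → γ < β / 2 → ∀ m > 0, ∀ n : ℕ,
      |(μ ((fun x => T^[n] x) ⁻¹' {x | dist x y > (γ / k) * Real.log n} ∩
            (fun x => T^[n + m] x) ⁻¹' {x | dist x y > (γ / k) * Real.log (n + m)})).toReal -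
          (μ ((fun x => T^[n] x) ⁻¹' {x | dist x y > (γ / k) * Real.log n})).toReal *
            (μ ((fun x => T^[n + m] x) ⁻¹' {x | dist x y > (γ / k) * Real.log (n + m)})).toReal| ≤
        C * (μ ((fun x => T^[n] x) ⁻¹' {x | dist x y > (γ / k) * Real.log n})).toReal *
          (μ ((fun x => T^[n + m] x) ⁻¹' {x | dist x y > (γ / k) * Real.log (n + m)})).toReal *
          (m : ℝ) ^ (-β)) :
    ∀ᵐ x ∂μ,
      Filter.limsup (fun n : ℕ => dist (T^[n] x) y / Real.log n) atTop ≥ β / (2 * k) := by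
  have htailL : ∀ t > (0 : ℝ), C₁ * Real.exp (-k * t) ≤ (μ {x | dist x y > t}).toReal :=
    fun t ht => (htail t ht).1
  have htailU : ∀ t > (0 : ℝ), (μ {x | dist x y > t}).toReal ≤ C₂ * Real.exp (-k * t) :=
    fun t ht => (htail t ht).2
  have hbnd := bounded_above_ae μ y k C₂ hk hC₂ htailU T hT
  have hkey : ∀ q : ℚ, ∀ᵐ x ∂μ, 0 < (q : ℝ) → (q : ℝ) < β / 2 →
      ∃ᶠ n in atTop, dist (T^[n] x) y > ((q : ℝ) / k) * Real.log n := by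
    intro q
    by_cases h0 : 0 < (q : ℝ)
    · by_cases h2 : (q : ℝ) < β / 2
      · have hf := freq_excursions μ y k C₁ hk hC₁ htailL T hT β C (q : ℝ)
          hβ hβ1 hC h0 (by linarith) (hcorr (q : ℝ) h0 h2)
        exact hf.mono fun x hx _ _ => hx
      · exact ae_of_all _ fun x _ h2' => absurd h2' h2
    · exact ae_of_all _ fun x h0' _ => absurd h0' h0
  have hall := (ae_all_iff).mpr hkey
  filter_upwards [hall, hbnd] with x hx hbx
  set L := Filter.limsup (fun n : ℕ => dist (T^[n] x) y / Real.log n) atTop with hL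
  have hLbdd : IsBoundedUnder (· ≤ ·) atTop
      (fun n : ℕ => dist (T^[n] x) y / Real.log n) := by
    refine ⟨2 / k, eventually_map.mpr ?_⟩
    filter_upwards [hbx, eventually_ge_atTop 2] with n hn hn2
    have hn1 : (1 : ℝ) < (n : ℝ) := by exact_mod_cast hn2
    have hlog : 0 < Real.log n := Real.log_pos hn1
    rw [div_le_iff₀ hlog]
    linarith [hn]
  have hq : ∀ q : ℚ, 0 < (q : ℝ) → (q : ℝ) < β / 2 → (q : ℝ) / k ≤ L := by
    intro q h0 h2
    apply le_limsup_of_frequently_le _ hLbdd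
    have hfreq := (hx q h0 h2).and_eventually (eventually_ge_atTop 2)
    apply hfreq.mono
    rintro n ⟨hgt, hn2⟩
    have hn1 : (1 : ℝ) < (n : ℝ) := by exact_mod_cast hn2
    have hlog : 0 < Real.log n := Real.log_pos hn1
    rw [le_div_iff₀ hlog]
    exact hgt.le
  rw [ge_iff_le]
  by_contra hcon
  push_neg at hcon
  rw [lt_div_iff₀ (by positivity : (0:ℝ) < 2 * k)] at hcon
  have hkL : k * L < β / 2 := by linarith
  obtain ⟨q, hq1, hq2⟩ := exists_rat_btwn
    (show max 0 (k * L) < β / 2 from max_lt (by positivity) hkL)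
  have h0 : 0 < (q : ℝ) := lt_of_le_of_lt (le_max_left 0 (k * L)) hq1
  have hL' := hq q h0 hq2
  have hkLq : k * L < (q : ℝ) := lt_of_le_of_lt (le_max_right 0 (k * L)) hq1
  have : L < (q : ℝ) / k := by
    rw [lt_div_iff₀ hk]
    linarith
  linarith [hL']
end

section
/- Let k > 0 and let A_t ⊆ X be a family of measurable sets in a probability space with C₁ e^{−kt} ≤ μ(A_t) ≤ C₂ e^{−kt} and A_s ⊇ A_t for s ≤ t. Let T be μ-preserving and for a measurable function F : X → [0,∞) with A_t = {F > t}, define L(x) = limsup_n F(T^n x)/log n. Then L(x) ≤ 1/k for μ-a.e. x. -/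
open MeasureTheory Filter

/-- Abstract easy half of the Kleinbock–Margulis logarithm law: if the
super-level sets of `F` have exponentially decaying measure and `T` preserves
`μ`, then `limsup F(T^n x)/log n ≤ 1/k` almost everywhere. -/
theorem abstract_log_law_upper
    {X : Type*} [MeasurableSpace X]
    (μ : Measure X) [IsProbabilityMeasure μ]
    (F : X → ℝ) (hF : Measurable F) (hF0 : ∀ x, 0 ≤ F x)
    (k C₁ C₂ : ℝ) (hk : 0 < k) (hC₁ : 0 < C₁) (hC₂ : 0 < C₂)
    (htail : ∀ t > (0 : ℝ),
      C₁ * Real.exp (-k * t) ≤ (μ {x | F x > t}).toReal ∧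
      (μ {x | F x > t}).toReal ≤ C₂ * Real.exp (-k * t))
    (T : X → X) (hT : MeasurePreserving T μ μ) :
    ∀ᵐ x ∂μ,
      Filter.limsup (fun n : ℕ => F (T^[n] x) / Real.log n) atTop ≤ 1 / k := by
  have key : ∀ δ : ℝ, 0 < δ → ∀ᵐ x ∂μ,
      Filter.limsup (fun n : ℕ => F (T^[n] x) / Real.log n) atTop ≤ (1 + δ) / k := by
    intro δ hδ
    set c : ℝ := (1 + δ) / k with hc
    have hc0 : 0 < c := div_pos (by linarith) hk
    set s : ℕ → Set X := fun n => T^[n] ⁻¹' {x | F x > c * Real.log n} with hs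
    have hFset : MeasurableSet {x | F x > c * Real.log 2} := measurableSet_lt measurable_const hF
    have hμs : ∀ n : ℕ, μ (s n) = μ {x | F x > c * Real.log n} := fun n =>
      (hT.iterate n).measure_preimage
        ((measurableSet_lt measurable_const hF).nullMeasurableSet)
    -- bound for n ≥ 2
    have hbound : ∀ n : ℕ, 2 ≤ n →
        (μ (s n)).toReal ≤ C₂ * (n : ℝ) ^ (-(1 + δ)) := by
      intro n hn
      have hn1 : (1 : ℝ) < (n : ℝ) := by exact_mod_cast Nat.lt_of_lt_of_le one_lt_two hn
      have hlog : 0 < Real.log n := Real.log_pos hn1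
      have ht : 0 < c * Real.log n := mul_pos hc0 hlog
      have h2 := (htail _ ht).2
      rw [hμs]
      refine h2.trans (le_of_eq ?_)
      congr 1
      rw [Real.rpow_def_of_pos (by linarith : (0:ℝ) < (n:ℝ))]
      have hkc : k * c = 1 + δ := by rw [hc]; field_simp [hk.ne']
      rw [show -k * (c * Real.log n) = Real.log n * (-(k * c)) by ring, hkc]
    -- summability
    have hsummand : Summable (fun n : ℕ => (μ (s n)).toReal) := by
      rw [← summable_nat_add_iff 2]
      have hg : Summable (fun n : ℕ => (n : ℝ) ^ (-(1 + δ))) :=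
        Real.summable_nat_rpow.mpr (by linarith)
      have hbase : Summable (fun n : ℕ => C₂ * ((n + 2 : ℕ) : ℝ) ^ (-(1 + δ))) :=
        ((summable_nat_add_iff (f := fun n : ℕ => (n : ℝ) ^ (-(1 + δ))) 2).mpr hg).mul_left C₂
      exact Summable.of_nonneg_of_le (fun n => ENNReal.toReal_nonneg)
        (fun n => hbound (n + 2) (by omega)) hbase
    have hne : (∑' n, μ (s n)) ≠ ⊤ := by
      have : (∑' n, μ (s n)) = ENNReal.ofReal (∑' n, (μ (s n)).toReal) := by
        rw [ENNReal.ofReal_tsum_of_nonneg (fun n => ENNReal.toReal_nonneg) hsummand]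
        exact tsum_congr fun n => (ENNReal.ofReal_toReal (measure_ne_top μ _)).symm
      rw [this]; exact ENNReal.ofReal_ne_top
    filter_upwards [ae_eventually_notMem hne] with x hx
    have hev : ∀ᶠ n : ℕ in atTop, F (T^[n] x) / Real.log n ≤ c := by
      filter_upwards [hx, eventually_ge_atTop 2] with n hn hn2
      have hn1 : (1 : ℝ) < (n : ℝ) := by exact_mod_cast Nat.lt_of_lt_of_le one_lt_two hn2
      have hlog : 0 < Real.log n := Real.log_pos hn1
      rw [div_le_iff₀ hlog]
      have : ¬ (F (T^[n] x) > c * Real.log n) := hn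
      linarith [not_lt.mp this]
    have hcb : IsCoboundedUnder (· ≤ ·) atTop (fun n : ℕ => F (T^[n] x) / Real.log n) :=
      isCoboundedUnder_le_of_le atTop (x := 0)
        (fun n => div_nonneg (hF0 _) (Real.log_natCast_nonneg n))
    exact Filter.limsup_le_of_le hcb hev
  have hall : ∀ᵐ x ∂μ, ∀ m : ℕ,
      Filter.limsup (fun n : ℕ => F (T^[n] x) / Real.log n) atTop ≤ (1 + 1/((m:ℝ)+1)) / k :=
    ae_all_iff.mpr fun m => key _ (by positivity)
  filter_upwards [hall] with x hx
  have htend : Tendsto (fun m : ℕ => (1 + 1/((m:ℝ)+1)) / k) atTop (nhds (1 / k)) := by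
    have h0 : Tendsto (fun m : ℕ => 1/((m:ℝ)+1)) atTop (nhds 0) :=
      tendsto_one_div_add_atTop_nhds_zero_nat
    have := ((tendsto_const_nhds (x := (1 : ℝ)) (f := atTop)).add h0).div_const k
    simpa using this
  exact ge_of_tendsto' htend hx
end
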